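/- Let F = ℝ², x_0 ∈ F, V : F → ℝ bounded and continuous, c > 0, and define L(x,y) = (V(x)+V(y))/2 + c|x−y|². For p ∈ [2,∞), h > 0, ξ ≥ 0, consider S^{h,ξ}(μ) = ∫V dμ + c∫∫|x−y|² dμ(x)dμ(y) + (1/(2h)) W_p(μ, δ_{x_0})² + ξ W_p(μ, δ_{x_0}). Then every minimizer of S^{h,ξ} over compactly supported Borel probability measures is a Dirac measure δ_{x_1} for some x_1 ∈ F. -/

import Mathlib

set_option maxHeartbeats 1000000
open MeasureTheory

noncomputable def wassersteinDist {F : Type*} [MetricSpace F] [MeasurableSpace F]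
    (p : ℝ) (μ ν : Measure F) : ℝ :=
  (⨅ P : {P : Measure (F × F) // P.map Prod.fst = μ ∧ P.map Prod.snd = ν},
      ∫ q, dist q.1 q.2 ^ p ∂(P.1)) ^ (1 / p)

/-- Power mean inequality for probability measures. -/
lemma integral_le_rpow_integral_rpow {α : Type*} [MeasurableSpace α]
    {μ : Measure α} [IsProbabilityMeasure μ]
    {f : α → ℝ} {q : ℝ} (hq : 1 ≤ q) (hfm : AEStronglyMeasurable f μ)
    (hnn : ∀ x, 0 ≤ f x) {C : ℝ} (hbd : ∀ᵐ x ∂μ, ‖f x‖ ≤ C) :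
    ∫ x, f x ∂μ ≤ (∫ x, f x ^ q ∂μ) ^ (1 / q) := by
  rcases eq_or_lt_of_le hq with h1 | h1
  · simp [← h1, Real.rpow_one]
  · have hpq := Real.HolderConjugate.conjExponent h1
    have hf : MemLp f (ENNReal.ofReal q) μ := MemLp.of_bound hfm C hbd
    have hg : MemLp (fun _ : α => (1:ℝ)) (ENNReal.ofReal q.conjExponent) μ := memLp_const 1
    have H := integral_mul_le_Lp_mul_Lq_of_nonneg hpq (ae_of_all _ hnn)
      (ae_of_all _ fun _ => zero_le_one) hf hg
    simpa [Real.one_rpow] using H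

/-- a.e. bound from compact support. -/
lemma exists_ae_bound {X : Type*} [MeasurableSpace X] [TopologicalSpace X]
    {μ : Measure X} [IsProbabilityMeasure μ] {K : Set X} (hK : IsCompact K)
    (hK0 : μ Kᶜ = 0) {g : X → ℝ} (hg : Continuous g) :
    ∃ C, ∀ᵐ x ∂μ, ‖g x‖ ≤ C := by
  have hne : K.Nonempty := by
    by_contra hne
    rw [Set.not_nonempty_iff_eq_empty] at hne
    simp [hne] at hK0
  obtain ⟨z, hz, hmax⟩ := hK.exists_isMaxOn hne (continuous_abs.comp hg).continuousOn
  refine ⟨|g z|, ?_⟩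
  have hmem : ∀ᵐ x ∂μ, x ∈ K := by rw [ae_iff]; exact hK0
  exact hmem.mono fun x hx => by simpa [Real.norm_eq_abs] using hmax hx

lemma wass_to_dirac {X : Type*} [MetricSpace X] [MeasurableSpace X] [BorelSpace X]
    {p : ℝ} (hp : 0 ≤ p) (x₀ : X) (μ : Measure X) [IsProbabilityMeasure μ] :
    wassersteinDist p μ (Measure.dirac x₀) = (∫ x, dist x x₀ ^ p ∂μ) ^ (1 / p) := by
  have hcont : Continuous fun x : X => dist x x₀ ^ p :=
    (continuous_id.dist continuous_const).rpow_const fun x => Or.inr hp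
  have key : ∀ P : {P : Measure (X × X) //
      P.map Prod.fst = μ ∧ P.map Prod.snd = Measure.dirac x₀},
      ∫ q, dist q.1 q.2 ^ p ∂(P.1) = ∫ x, dist x x₀ ^ p ∂μ := by
    rintro ⟨P, h1, h2⟩
    have hP0 : P (Prod.snd ⁻¹' {x₀}ᶜ) = 0 := by
      rw [← Measure.map_apply measurable_snd (measurableSet_singleton x₀).compl, h2]
      simp
    have hae : ∀ᵐ q ∂P, q.2 = x₀ := by rw [ae_iff]; exact hP0
    calc ∫ q, dist q.1 q.2 ^ p ∂P = ∫ q, dist q.1 x₀ ^ p ∂P :=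
          integral_congr_ae (hae.mono fun q hq => by simp only [hq])
      _ = ∫ x, dist x x₀ ^ p ∂(P.map Prod.fst) :=
          (integral_map measurable_fst.aemeasurable hcont.aestronglyMeasurable).symm
      _ = _ := by rw [h1]
  have hne : Nonempty {P : Measure (X × X) //
      P.map Prod.fst = μ ∧ P.map Prod.snd = Measure.dirac x₀} :=
    ⟨⟨μ.prod (Measure.dirac x₀), by simp [Measure.map_fst_prod], by simp [Measure.map_snd_prod]⟩⟩
  rw [wassersteinDist, iInf_congr key, ciInf_const]

lemma wass_dirac_dirac {X : Type*} [MetricSpace X] [MeasurableSpace X] [BorelSpace X]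
    {p : ℝ} (hp : 0 < p) (x₀ z : X) :
    wassersteinDist p (Measure.dirac z) (Measure.dirac x₀) = dist z x₀ := by
  rw [wass_to_dirac hp.le, integral_dirac, ← Real.rpow_mul dist_nonneg, mul_one_div,
    div_self hp.ne', Real.rpow_one]

theorem minimizers_are_dirac
    (x₀ : EuclideanSpace ℝ (Fin 2))
    (V : EuclideanSpace ℝ (Fin 2) → ℝ) (hVcont : Continuous V)
    (hVbdd : ∃ C : ℝ, ∀ x, |V x| ≤ C)
    (c : ℝ) (hc : 0 < c) (p : ℝ) (hp : 2 ≤ p) (h ξ : ℝ) (hh : 0 < h) (hξ : 0 ≤ ξ)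
    (Shξ : Measure (EuclideanSpace ℝ (Fin 2)) → ℝ)
    (hShξ : ∀ μ : Measure (EuclideanSpace ℝ (Fin 2)),
      Shξ μ = (∫ x, V x ∂μ) + c * (∫ x, ∫ y, dist x y ^ 2 ∂μ ∂μ) +
        (1 / (2 * h)) * wassersteinDist p μ (Measure.dirac x₀) ^ 2 +
        ξ * wassersteinDist p μ (Measure.dirac x₀))
    (μ : Measure (EuclideanSpace ℝ (Fin 2))) [IsProbabilityMeasure μ]
    (hμcpt : ∃ K : Set (EuclideanSpace ℝ (Fin 2)), IsCompact K ∧ μ Kᶜ = 0)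
    (hmin : ∀ ν : Measure (EuclideanSpace ℝ (Fin 2)), IsProbabilityMeasure ν →
      (∃ K : Set (EuclideanSpace ℝ (Fin 2)), IsCompact K ∧ ν Kᶜ = 0) →
      Shξ μ ≤ Shξ ν) :
    ∃ x₁ : EuclideanSpace ℝ (Fin 2), μ = Measure.dirac x₁ := by
  obtain ⟨K, hK, hK0⟩ := hμcpt
  have hp0 : (0:ℝ) < p := lt_of_lt_of_le two_pos hp
  have hmemK : ∀ᵐ x ∂μ, x ∈ K := mem_ae_iff.mpr hK0
  have hd : Continuous fun x : EuclideanSpace ℝ (Fin 2) => dist x x₀ :=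
    continuous_id.dist continuous_const
  have hd2 : Continuous fun x : EuclideanSpace ℝ (Fin 2) => dist x x₀ ^ 2 := hd.pow 2
  have hdp : Continuous fun x : EuclideanSpace ℝ (Fin 2) => dist x x₀ ^ p :=
    hd.rpow_const fun x => Or.inr hp0.le
  obtain ⟨C1, hC1⟩ := exists_ae_bound hK hK0 hd
  obtain ⟨C2, hC2⟩ := exists_ae_bound hK hK0 hd2
  obtain ⟨CV, hCV⟩ := hVbdd
  have hVint : Integrable V μ := (integrable_const CV).mono' hVcont.aestronglyMeasurable
    (ae_of_all _ fun x => by simpa using hCV x)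
  have hdint : Integrable (fun x => dist x x₀) μ :=
    (integrable_const C1).mono' hd.aestronglyMeasurable hC1
  have hd2int : Integrable (fun x => dist x x₀ ^ 2) μ :=
    (integrable_const C2).mono' hd2.aestronglyMeasurable hC2
  set A := ∫ x, dist x x₀ ^ p ∂μ with hA
  have hA0 : 0 ≤ A := integral_nonneg fun x => Real.rpow_nonneg dist_nonneg p
  have hW : wassersteinDist p μ (Measure.dirac x₀) = A ^ (1/p) := wass_to_dirac hp0.le x₀ μ
  -- Hölder comparisons
  have hH1 : ∫ x, dist x x₀ ∂μ ≤ A ^ (1/p) :=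
    integral_le_rpow_integral_rpow (le_trans one_le_two hp) hd.aestronglyMeasurable
      (fun x => dist_nonneg) hC1
  have hH2 : ∫ x, dist x x₀ ^ 2 ∂μ ≤ A ^ (2/p) := by
    have hq : (1:ℝ) ≤ p/2 := by linarith
    have H := integral_le_rpow_integral_rpow hq hd2.aestronglyMeasurable
      (fun x => by positivity) hC2
    have hrw : ∀ x : EuclideanSpace ℝ (Fin 2),
        (dist x x₀ ^ 2) ^ (p/2) = dist x x₀ ^ p := by
      intro x
      rw [← Real.rpow_natCast (dist x x₀) 2, ← Real.rpow_mul dist_nonneg]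
      congr 1
      push_cast
      ring
    rw [one_div_div] at H
    simp_rw [hrw] at H
    exact H
  have hWsq : (A ^ (1/p)) ^ 2 = A ^ ((2:ℝ)/p) := by
    rw [← Real.rpow_natCast (A ^ (1/p)) 2, ← Real.rpow_mul hA0]
    congr 1
    push_cast
    ring
  -- the comparison function
  set g := fun z : EuclideanSpace ℝ (Fin 2) =>
    V z + (1/(2*h)) * dist z x₀ ^ 2 + ξ * dist z x₀ with hg
  have hgint : Integrable g μ :=
    (hVint.add (hd2int.const_mul _)).add (hdint.const_mul ξ)
  have hSdirac : ∀ z, Shξ (Measure.dirac z) = g z := by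
    intro z
    rw [hShξ, wass_dirac_dirac hp0]
    simp [hg, integral_dirac, dist_self]
  obtain ⟨z, hzK, hz⟩ := exists_notMem_null_le_integral hgint hK0
  have hle : Shξ μ ≤ g z := by
    rw [← hSdirac z]
    exact hmin _ inferInstance ⟨{z}, isCompact_singleton, by simp⟩
  have hsplit : ∫ x, g x ∂μ = (∫ x, V x ∂μ) + (1/(2*h)) * (∫ x, dist x x₀ ^ 2 ∂μ)
      + ξ * (∫ x, dist x x₀ ∂μ) := by
    have e1 : ∫ x, ((V x + (1/(2*h)) * dist x x₀ ^ 2) + ξ * dist x x₀) ∂μ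
        = (∫ x, (V x + (1/(2*h)) * dist x x₀ ^ 2) ∂μ) + ∫ x, ξ * dist x x₀ ∂μ :=
      integral_add (hVint.add (hd2int.const_mul _)) (hdint.const_mul ξ)
    have e2 : ∫ x, (V x + (1/(2*h)) * dist x x₀ ^ 2) ∂μ
        = (∫ x, V x ∂μ) + ∫ x, (1/(2*h)) * dist x x₀ ^ 2 ∂μ :=
      integral_add hVint (hd2int.const_mul _)
    rw [hg]
    rw [e1, e2, integral_const_mul, integral_const_mul]
  set I := ∫ x, ∫ y, dist x y ^ 2 ∂μ ∂μ with hI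
  have hI0 : 0 ≤ I :=
    integral_nonneg fun x => integral_nonneg fun y => by positivity
  have hchain : ∫ x, g x ∂μ ≤ Shξ μ - c * I := by
    rw [hShξ, hsplit, hW, hWsq, ← hI]
    have h2h : (0:ℝ) ≤ 1/(2*h) := by positivity
    have t1 := mul_le_mul_of_nonneg_left hH2 h2h
    have t2 := mul_le_mul_of_nonneg_left hH1 hξ
    linarith
  have hIz : I = 0 := by
    have : c * I ≤ 0 := by
      have := le_trans hle (le_trans hz hchain)
      linarith
    nlinarith
  -- interaction zero ⟹ Dirac
  have hKne : K.Nonempty := by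
    by_contra hne
    rw [Set.not_nonempty_iff_eq_empty] at hne
    simp [hne] at hK0
  -- bound the inner integral
  obtain ⟨b, hb, hbmax⟩ := hK.exists_isMaxOn hKne hd.continuousOn
  set D := (2 * dist b x₀) ^ 2 with hD
  have hD0 : (0:ℝ) ≤ D := by positivity
  have hDbd : ∀ x ∈ K, ∀ y ∈ K, dist x y ^ 2 ≤ D := by
    intro x hx y hy
    have h1 : dist x x₀ ≤ dist b x₀ := hbmax hx
    have h2 : dist y x₀ ≤ dist b x₀ := hbmax hy
    have h3 : dist x y ≤ 2 * dist b x₀ :=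
      le_trans (dist_triangle_right x y x₀) (by linarith)
    exact pow_le_pow_left₀ dist_nonneg h3 2
  have hFin : ∀ x, Integrable (fun y => dist x y ^ 2) μ := by
    intro x
    obtain ⟨Cx, hCx⟩ := exists_ae_bound hK hK0
      (g := fun y => dist x y ^ 2) ((continuous_const.dist continuous_id).pow 2)
    exact (integrable_const Cx).mono'
      ((continuous_const.dist continuous_id).pow 2).aestronglyMeasurable hCx
  set Fi := fun x : EuclideanSpace ℝ (Fin 2) => ∫ y, dist x y ^ 2 ∂μ with hFi
  have hFim : StronglyMeasurable Fi :=
    (continuous_dist.pow 2).stronglyMeasurable.integral_prod_right'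
  have hFibd : ∀ᵐ x ∂μ, ‖Fi x‖ ≤ D := by
    refine hmemK.mono fun x hx => ?_
    have h1 : Fi x ≤ D := by
      have : ∀ᵐ y ∂μ, dist x y ^ 2 ≤ D :=
        hmemK.mono fun y hy => hDbd x hx y hy
      calc Fi x ≤ ∫ _, D ∂μ := integral_mono_ae (hFin x) (integrable_const D) this
        _ = D := by simp
    have h2 : 0 ≤ Fi x := integral_nonneg fun y => by positivity
    rw [Real.norm_eq_abs, abs_of_nonneg h2]
    exact h1
  have hFiint : Integrable Fi μ :=
    (integrable_const D).mono' hFim.aestronglyMeasurable hFibd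
  have hFi0 : ∀ᵐ x ∂μ, Fi x = 0 :=
    (integral_eq_zero_iff_of_nonneg
      (fun x => integral_nonneg fun y => by positivity) hFiint).1 hIz
  haveI : (ae μ).NeBot := ae_neBot.2 (IsProbabilityMeasure.ne_zero μ)
  obtain ⟨x₁, hx₁⟩ := hFi0.exists
  have hae1 : ∀ᵐ y ∂μ, y = x₁ := by
    have := (integral_eq_zero_iff_of_nonneg
      (fun y => by positivity) (hFin x₁)).1 hx₁
    refine this.mono fun y hy => ?_
    have hd0 : dist x₁ y = 0 := by
      have := pow_eq_zero_iff (n := 2) two_ne_zero |>.1 hy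
      exact this
    exact (dist_eq_zero.1 hd0).symm
  refine ⟨x₁, ?_⟩
  have hnull : μ {y | y ≠ x₁} = 0 := ae_iff.1 hae1
  refine Measure.ext fun s hs => ?_
  rw [Measure.dirac_apply' x₁ hs]
  by_cases hxs : x₁ ∈ s
  · rw [Set.indicator_of_mem hxs]
    have hsc : μ sᶜ = 0 :=
      measure_mono_null (fun y hy (hq : y = x₁) => hy (hq ▸ hxs)) hnull
    simpa using (prob_compl_eq_zero_iff hs).1 hsc
  · rw [Set.indicator_of_notMem hxs]
    exact measure_mono_null (fun y hy (hq : y = x₁) => hxs (hq ▸ hy)) hnull
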